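/- arXiv:1409.0342 — 3 statements merged into one kernel-verified Lean document; each statement's English description precedes it below -/
import Mathlib

section
/- Operator convexity bound for the matrix exponential (key lemma in the proof of the noncommutative Azuma inequality). Let y ∈ M_d(ℂ) be Hermitian, c > 0, and t ∈ ℝ with t > 0. If −c·I ≤ y ≤ c·I, then exp(t·y) ≤ ((e^{tc} − e^{−tc})/(2c))·y + ((e^{tc} + e^{−tc})/2)·I. -/
namespace NCAzuma

open Matrix
open scoped ComplexOrder

/-- `Prob(x ≥ t)`: the normalized count `(1/d)·#{i : λ_i(x) ≥ t}` of eigenvalues of a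
Hermitian matrix `x` that are `≥ t`. -/
noncomputable def probGE (d : ℕ) (x : Matrix (Fin d) (Fin d) ℂ) (t : ℝ) : ℝ :=
  if hx : x.IsHermitian then
    ((Finset.univ.filter fun i => t ≤ hx.eigenvalues i).card : ℝ) / d
  else 0

/-- `Prob(|x| ≥ t)`: the normalized count `(1/d)·#{i : |λ_i(x)| ≥ t}`. -/
noncomputable def probAbsGE (d : ℕ) (x : Matrix (Fin d) (Fin d) ℂ) (t : ℝ) : ℝ :=
  if hx : x.IsHermitian then
    ((Finset.univ.filter fun i => t ≤ |hx.eigenvalues i|).card : ℝ) / d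
  else 0

/-- The Loewner order on matrices: `Loewner x y` means `x ≤ y`, i.e. `y - x` is
positive semidefinite. -/
def Loewner {d : ℕ} (x y : Matrix (Fin d) (Fin d) ℂ) : Prop := (y - x).PosSemidef

/-- A conditional expectation on `M_d(ℂ)`: a ℂ-linear, positive, unital, trace-preserving
map satisfying the bimodule property over its range. -/
structure CondExp (d : ℕ) where
  toFun : Matrix (Fin d) (Fin d) ℂ → Matrix (Fin d) (Fin d) ℂ
  map_add : ∀ x y, toFun (x + y) = toFun x + toFun y
  map_smul : ∀ (c : ℂ) (x), toFun (c • x) = c • toFun x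
  pos : ∀ x, x.PosSemidef → (toFun x).PosSemidef
  unital : toFun 1 = 1
  trace_pres : ∀ x, (toFun x).trace = x.trace
  bimodule : ∀ a x b, toFun a = a → toFun b = b → toFun (a * x * b) = a * toFun x * b

/-- A filtration `E_0, …, E_n`: `E_i ∘ E_j = E_j ∘ E_i = E_{min(i,j)}`. -/
def IsFiltration {d : ℕ} (n : ℕ) (E : ℕ → CondExp d) : Prop :=
  ∀ i ≤ n, ∀ j ≤ n, ∀ x, (E i).toFun ((E j).toFun x) = (E (min i j)).toFun x

/-- A Hermitian martingale `(x_j)_{0≤j≤n}` with respect to the filtration `(E_j)`: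
each `x_j` is Hermitian with `E_j(x_j) = x_j`, and `E_j(x_{j+1}) = x_j`. -/
def IsHermMartingale {d : ℕ} (n : ℕ) (E : ℕ → CondExp d)
    (x : ℕ → Matrix (Fin d) (Fin d) ℂ) : Prop :=
  (∀ j ≤ n, (x j).IsHermitian) ∧ (∀ j ≤ n, (E j).toFun (x j) = x j) ∧
  (∀ j < n, (E j).toFun (x (j + 1)) = x j)

/-- A Hermitian supermartingale `(x_j)_{0≤j≤n}`: `E_j(x_{j+1}) ≤ x_j` in the Loewner order. -/
def IsHermSupermartingale {d : ℕ} (n : ℕ) (E : ℕ → CondExp d)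
    (x : ℕ → Matrix (Fin d) (Fin d) ℂ) : Prop :=
  (∀ j ≤ n, (x j).IsHermitian) ∧ (∀ j ≤ n, (E j).toFun (x j) = x j) ∧
  (∀ j < n, Loewner ((E j).toFun (x (j + 1))) (x j))

/-- The matrix exponential. -/
noncomputable def mexp {d : ℕ} (x : Matrix (Fin d) (Fin d) ℂ) : Matrix (Fin d) (Fin d) ℂ :=
  NormedSpace.exp x

/-- The operator norm of a Hermitian matrix: `max_i |λ_i(x)|`. -/
noncomputable def opNorm (d : ℕ) (x : Matrix (Fin d) (Fin d) ℂ) : ℝ :=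
  if hx : x.IsHermitian then
    if hd : (Finset.univ : Finset (Fin d)).Nonempty then
      Finset.univ.sup' hd fun i => |hx.eigenvalues i|
    else 0
  else 0

/-- The `L_p`-norm with respect to the normalized trace:
`‖x‖_p = ((1/d)·∑_i |λ_i(x)|^p)^(1/p)` for Hermitian `x`. -/
noncomputable def pNorm (d : ℕ) (p : ℝ) (x : Matrix (Fin d) (Fin d) ℂ) : ℝ :=
  if hx : x.IsHermitian then
    ((∑ i, |hx.eigenvalues i| ^ p) / d) ^ (1 / p)
  else 0

/-- **Operator convexity bound for the matrix exponential**: if `−c·I ≤ y ≤ c·I` and `t > 0`,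
then `exp(t·y) ≤ ((e^{tc} − e^{−tc})/(2c))·y + ((e^{tc} + e^{−tc})/2)·I`. -/
theorem exp_loewner_convexity_bound {d : ℕ} (hd : 1 ≤ d)
    (y : Matrix (Fin d) (Fin d) ℂ) (hy : y.IsHermitian)
    (c t : ℝ) (hc : 0 < c) (ht : 0 < t)
    (hlow : Loewner (-((c : ℂ) • (1 : Matrix (Fin d) (Fin d) ℂ))) y)
    (hupp : Loewner y ((c : ℂ) • (1 : Matrix (Fin d) (Fin d) ℂ))) :
    Loewner (mexp ((t : ℂ) • y))
      ((((Real.exp (t * c) - Real.exp (-(t * c))) / (2 * c) : ℝ) : ℂ) • y +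
        (((Real.exp (t * c) + Real.exp (-(t * c))) / 2 : ℝ) : ℂ) •
          (1 : Matrix (Fin d) (Fin d) ℂ)) := by
  set a : ℝ := (Real.exp (t * c) - Real.exp (-(t * c))) / (2 * c) with ha
  set b : ℝ := (Real.exp (t * c) + Real.exp (-(t * c))) / 2 with hb
  set U : Matrix (Fin d) (Fin d) ℂ := (hy.eigenvectorUnitary : Matrix (Fin d) (Fin d) ℂ) with hU
  have hU1 : star U * U = 1 := mem_unitaryGroup_iff'.mp hy.eigenvectorUnitary.2
  have hU2 : U * star U = 1 := mem_unitaryGroup_iff.mp hy.eigenvectorUnitary.2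
  have hUinv : U⁻¹ = star U := inv_eq_left_inv hU1
  have hUunit : IsUnit U := isUnit_iff_exists.mpr ⟨star U, hU2, hU1⟩
  set lam : Fin d → ℝ := hy.eigenvalues with hlam
  have hord : (RCLike.ofReal ∘ hy.eigenvalues : Fin d → ℂ) = fun i => ((lam i : ℝ) : ℂ) := rfl
  -- eigenvalue bounds
  have hquad : ∀ (M : Matrix (Fin d) (Fin d) ℂ), M.PosSemidef → ∀ i : Fin d,
      (0:ℂ) ≤ star (⇑(hy.eigenvectorBasis i)) ⬝ᵥ (M *ᵥ ⇑(hy.eigenvectorBasis i)) :=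
    fun M hM i => hM.dotProduct_mulVec_nonneg _
  have hvv : ∀ i : Fin d, star (⇑(hy.eigenvectorBasis i)) ⬝ᵥ ⇑(hy.eigenvectorBasis i) = 1 := by
    intro i
    have hn := hy.eigenvectorBasis.orthonormal.1 i
    have h2 : (inner ℂ (hy.eigenvectorBasis i) (hy.eigenvectorBasis i) : ℂ)
        = star (⇑(hy.eigenvectorBasis i)) ⬝ᵥ ⇑(hy.eigenvectorBasis i) := by
      rw [EuclideanSpace.inner_eq_star_dotProduct, dotProduct_comm]
    rw [← h2, inner_self_eq_norm_sq_to_K, hn]; norm_num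
  have hle : ∀ i, lam i ≤ c := by
    intro i
    have h := hquad _ hupp i
    rw [sub_mulVec, smul_mulVec, one_mulVec, hy.mulVec_eigenvectorBasis] at h
    have hsm : (lam i) • ⇑(hy.eigenvectorBasis i) = ((lam i : ℂ)) • ⇑(hy.eigenvectorBasis i) := by
      funext j; simp [Complex.real_smul]
    rw [hsm, dotProduct_sub, dotProduct_smul, dotProduct_smul, hvv i] at h
    simp only [smul_eq_mul, mul_one] at h
    have h' : (0:ℂ) ≤ ((c - lam i : ℝ) : ℂ) := by push_cast; convert h using 1
    rw [← Complex.ofReal_zero, Complex.real_le_real] at h'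
    linarith
  have hge : ∀ i, -c ≤ lam i := by
    intro i
    have h := hquad _ hlow i
    rw [sub_neg_eq_add, add_mulVec, smul_mulVec, one_mulVec,
      hy.mulVec_eigenvectorBasis] at h
    have hsm : (lam i) • ⇑(hy.eigenvectorBasis i) = ((lam i : ℂ)) • ⇑(hy.eigenvectorBasis i) := by
      funext j; simp [Complex.real_smul]
    rw [hsm, dotProduct_add, dotProduct_smul, dotProduct_smul, hvv i] at h
    simp only [smul_eq_mul, mul_one] at h
    have h' : (0:ℂ) ≤ ((lam i + c : ℝ) : ℂ) := by push_cast; convert h using 1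
    rw [← Complex.ofReal_zero, Complex.real_le_real] at h'
    linarith
  -- scalar convexity bound
  have hscal : ∀ i, Real.exp (t * lam i) ≤ a * lam i + b := by
    intro i
    set s := lam i with hs
    set θ : ℝ := (c + s) / (2 * c) with hθ
    have h0 : 0 ≤ θ := div_nonneg (by linarith [hge i]) (by linarith)
    have h1' : 0 ≤ 1 - θ := by
      rw [hθ, sub_nonneg, div_le_one (by linarith)]; linarith [hle i]
    have key := convexOn_exp.2 (Set.mem_univ (t * c)) (Set.mem_univ (-(t * c))) h0 h1' (by ring)
    have e1 : θ • (t * c) + (1 - θ) • (-(t * c)) = t * s := by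
      rw [smul_eq_mul, smul_eq_mul, hθ]; field_simp; ring
    rw [e1] at key
    calc Real.exp (t * s) ≤ θ * Real.exp (t * c) + (1 - θ) * Real.exp (-(t * c)) := key
      _ = a * s + b := by rw [hθ, ha, hb]; field_simp; ring
  -- diagonalize
  have hty : (t : ℂ) • y = U * diagonal (fun i => ((t * lam i : ℝ) : ℂ)) * U⁻¹ := by
    rw [hUinv]
    conv_lhs => rw [hy.spectral_theorem, Unitary.conjStarAlgAut_apply, hord]
    have hfun : (fun i => ((t * lam i : ℝ) : ℂ))
        = (t : ℂ) • (fun i => ((lam i : ℝ) : ℂ)) := by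
      funext i; simp [Pi.smul_apply, smul_eq_mul]
    rw [hfun, diagonal_smul, Matrix.mul_smul, Matrix.smul_mul]
  have hexp : mexp ((t : ℂ) • y)
      = U * diagonal (fun i => ((Real.exp (t * lam i) : ℝ) : ℂ)) * star U := by
    unfold mexp
    rw [hty, Matrix.exp_conj U _ hUunit, Matrix.exp_diagonal _, hUinv]
    have hpe : NormedSpace.exp (fun i : Fin d => ((t * lam i : ℝ) : ℂ))
        = fun i => ((Real.exp (t * lam i) : ℝ) : ℂ) := by
      rw [Pi.exp_def]; funext i
      rw [← Complex.exp_eq_exp_ℂ, ← Complex.ofReal_exp]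
    rw [hpe]
  have hrhs : ((a : ℂ)) • y + ((b : ℂ)) • (1 : Matrix (Fin d) (Fin d) ℂ)
      = U * diagonal (fun i => ((a * lam i + b : ℝ) : ℂ)) * star U := by
    have hD : diagonal (fun i => ((a * lam i + b : ℝ) : ℂ))
        = (a : ℂ) • diagonal (fun i => ((lam i : ℝ) : ℂ))
          + (b : ℂ) • (1 : Matrix (Fin d) (Fin d) ℂ) := by
      ext i j
      by_cases h : i = j
      · subst h
        simp only [diagonal_apply_eq, Matrix.add_apply, Matrix.smul_apply,
          Matrix.one_apply_eq, smul_eq_mul, mul_one]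
        push_cast; ring
      · simp [diagonal_apply_ne _ h, Matrix.one_apply_ne h]
    rw [hD]
    conv_lhs => rw [hy.spectral_theorem, Unitary.conjStarAlgAut_apply, hord, ← hU2]
    simp only [Matrix.mul_add, Matrix.add_mul, Matrix.mul_smul, Matrix.smul_mul,
      Matrix.mul_one, Matrix.one_mul]
    rfl
  -- conclude
  rw [Loewner, hexp, hrhs, ← Matrix.sub_mul, ← Matrix.mul_sub, diagonal_sub]
  have hg : (0 : Fin d → ℂ) ≤ fun i =>
      ((a * lam i + b : ℝ) : ℂ) - ((Real.exp (t * lam i) : ℝ) : ℂ) := by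
    intro i
    simp only [Pi.zero_apply, ← Complex.ofReal_sub]
    rw [← Complex.ofReal_zero, Complex.real_le_real]
    linarith [hscal i]
  exact (PosSemidef.diagonal hg).mul_mul_conjTranspose_same U

end NCAzuma
end

section
/- Single-step Hoeffding bound under a conditional expectation (established in Steps of the proof of the noncommutative Azuma inequality). Let E be a conditional expectation on M_d(ℂ), let y ∈ M_d(ℂ) be Hermitian with E(y) = 0 and −c·I ≤ y ≤ c·I for some c > 0, and let t > 0. Then E(exp(t·y)) ≤ ((e^{tc} + e^{−tc})/2)·I ≤ exp(t²c²/2)·I. -/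
namespace NCAzuma

open Matrix
open scoped ComplexOrder

section Aux

variable {d : ℕ}

/-- Scalar Hoeffding step: convexity of `exp` on `[-c, c]`. -/
lemma scalar_exp_le {c t l : ℝ} (hc : 0 < c) (hl1 : -c ≤ l) (hl2 : l ≤ c) :
    Real.exp (t * l) ≤ (Real.exp (t * c) + Real.exp (-(t * c))) / 2 +
      ((Real.exp (t * c) - Real.exp (-(t * c))) / (2 * c)) * l := by
  have hc' : (2 : ℝ) * c ≠ 0 := by positivity
  set a : ℝ := (c - l) / (2 * c) with ha_def
  set b : ℝ := (c + l) / (2 * c) with hb_def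
  have ha : 0 ≤ a := by
    apply div_nonneg (by linarith) (by positivity)
  have hb : 0 ≤ b := by
    apply div_nonneg (by linarith) (by positivity)
  have hab : a + b = 1 := by
    rw [← add_div, div_eq_one_iff_eq hc']
    ring
  have key := convexOn_exp.2 (Set.mem_univ (-(t * c))) (Set.mem_univ (t * c)) ha hb hab
  have h1 : a • (-(t * c)) + b • (t * c) = t * l := by
    simp only [smul_eq_mul, ha_def, hb_def]
    field_simp
    ring
  rw [h1] at key
  refine key.trans (le_of_eq ?_)
  simp only [smul_eq_mul, ha_def, hb_def]
  field_simp
  ring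

lemma condexp_sub (E : CondExp d) (a b : Matrix (Fin d) (Fin d) ℂ) :
    E.toFun (a - b) = E.toFun a - E.toFun b := by
  have h1 : a - b = a + (-1 : ℂ) • b := by
    rw [neg_one_smul, sub_eq_add_neg]
  rw [h1, E.map_add, E.map_smul, neg_one_smul, ← sub_eq_add_neg]

/-- Monotonicity of a conditional expectation with respect to the Loewner order. -/
lemma condexp_mono (E : CondExp d) {a b : Matrix (Fin d) (Fin d) ℂ}
    (h : Loewner a b) : Loewner (E.toFun a) (E.toFun b) := by
  unfold Loewner at h ⊢
  rw [← condexp_sub]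
  exact E.pos _ h

/-- Constant matrices as diagonal matrices. -/
lemma smul_one_diag (a : ℂ) :
    (a • (1 : Matrix (Fin d) (Fin d) ℂ)) = Matrix.diagonal (fun _ => a) :=
  Matrix.smul_one_eq_diagonal a

end Aux

/-- **Single-step Hoeffding bound under a conditional expectation**: if `E(y) = 0` and
`−c·I ≤ y ≤ c·I`, then `E(exp(t·y)) ≤ ((e^{tc} + e^{−tc})/2)·I ≤ exp(t²c²/2)·I`. -/
theorem condexp_exp_hoeffding_bound {d : ℕ} (hd : 1 ≤ d) (E : CondExp d)
    (y : Matrix (Fin d) (Fin d) ℂ) (hy : y.IsHermitian) (hEy : E.toFun y = 0)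
    (c t : ℝ) (hc : 0 < c) (ht : 0 < t)
    (hlow : Loewner (-((c : ℂ) • (1 : Matrix (Fin d) (Fin d) ℂ))) y)
    (hupp : Loewner y ((c : ℂ) • (1 : Matrix (Fin d) (Fin d) ℂ))) :
    Loewner (E.toFun (mexp ((t : ℂ) • y)))
        ((((Real.exp (t * c) + Real.exp (-(t * c))) / 2 : ℝ) : ℂ) •
          (1 : Matrix (Fin d) (Fin d) ℂ)) ∧
    Loewner ((((Real.exp (t * c) + Real.exp (-(t * c))) / 2 : ℝ) : ℂ) •
          (1 : Matrix (Fin d) (Fin d) ℂ))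
        (((Real.exp (t ^ 2 * c ^ 2 / 2) : ℝ) : ℂ) • (1 : Matrix (Fin d) (Fin d) ℂ)) := by
  classical
  set U : Matrix (Fin d) (Fin d) ℂ := (hy.eigenvectorUnitary : Matrix (Fin d) (Fin d) ℂ)
    with hU_def
  set lam : Fin d → ℝ := hy.eigenvalues with hlam_def
  have hmem := hy.eigenvectorUnitary.2
  have hUU : star U * U = 1 := (Unitary.mem_iff.mp hmem).1
  have hUU' : U * star U = 1 := (Unitary.mem_iff.mp hmem).2
  have hUunit : IsUnit U := ⟨Unitary.toUnits hy.eigenvectorUnitary, rfl⟩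
  have hUinv : U⁻¹ = star U := Matrix.inv_eq_left_inv hUU
  have hspec : y = U * Matrix.diagonal (fun i => ((lam i : ℝ) : ℂ)) * star U := by
    exact hy.spectral_theorem
  have hdiagy : star U * y * (star U)ᴴ = Matrix.diagonal (fun i => ((lam i : ℝ) : ℂ)) := by
    have hUs : (star U)ᴴ = U := by
      rw [Matrix.star_eq_conjTranspose, Matrix.conjTranspose_conjTranspose]
    rw [hUs]
    conv_lhs => rw [hspec]
    rw [← mul_assoc, ← mul_assoc, hUU, one_mul, mul_assoc, hUU, mul_one]
  have hstar1 : star U * (star U)ᴴ = 1 := by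
    simpa [Matrix.star_eq_conjTranspose] using hUU
  -- eigenvalue bounds
  have hub : ∀ i, lam i ≤ c := by
    intro i
    have h1 := hupp.mul_mul_conjTranspose_same (star U)
    have h2 : star U * ((c : ℂ) • (1 : Matrix (Fin d) (Fin d) ℂ) - y) * (star U)ᴴ
        = Matrix.diagonal (fun i => ((c - lam i : ℝ) : ℂ)) := by
      rw [Matrix.mul_sub, Matrix.sub_mul, hdiagy, Matrix.mul_smul, mul_one,
        Matrix.smul_mul, hstar1, smul_one_diag, Matrix.diagonal_sub]
      congr 1
      funext j
      push_cast
      ring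
    rw [h2] at h1
    have h3 := Matrix.posSemidef_diagonal_iff.mp h1 i
    have := Complex.zero_le_real.mp h3
    linarith
  have hlb : ∀ i, -c ≤ lam i := by
    intro i
    have h1 := hlow.mul_mul_conjTranspose_same (star U)
    have h2 : star U * (y - -((c : ℂ) • (1 : Matrix (Fin d) (Fin d) ℂ))) * (star U)ᴴ
        = Matrix.diagonal (fun i => ((lam i + c : ℝ) : ℂ)) := by
      rw [sub_neg_eq_add, Matrix.mul_add, Matrix.add_mul, hdiagy, Matrix.mul_smul, mul_one,
        Matrix.smul_mul, hstar1, smul_one_diag, Matrix.diagonal_add]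
      congr 1
      funext j
      push_cast
      ring
    rw [h2] at h1
    have h3 := Matrix.posSemidef_diagonal_iff.mp h1 i
    have := Complex.zero_le_real.mp h3
    linarith
  set K1 : ℝ := (Real.exp (t * c) + Real.exp (-(t * c))) / 2 with hK1_def
  set s : ℝ := (Real.exp (t * c) - Real.exp (-(t * c))) / (2 * c) with hs_def
  -- conjugation identities
  have hsmul : ∀ r : ℝ, (r : ℂ) • y
      = U * Matrix.diagonal (fun i => ((r * lam i : ℝ) : ℂ)) * star U := by
    intro r
    have hD : Matrix.diagonal (fun i => ((r * lam i : ℝ) : ℂ))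
        = (r : ℂ) • Matrix.diagonal (fun i => ((lam i : ℝ) : ℂ)) := by
      have hfun : (fun i => ((r * lam i : ℝ) : ℂ)) = (r : ℂ) • (fun i => ((lam i : ℝ) : ℂ)) := by
        funext j
        simp [Pi.smul_apply, smul_eq_mul, Complex.ofReal_mul]
      rw [hfun, Matrix.diagonal_smul]
    rw [hD, Matrix.mul_smul, Matrix.smul_mul, ← hspec]
  have hconst : ∀ r : ℝ, (r : ℂ) • (1 : Matrix (Fin d) (Fin d) ℂ)
      = U * Matrix.diagonal (fun _ => (r : ℂ)) * star U := by
    intro r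
    rw [← smul_one_diag, Matrix.mul_smul, mul_one, Matrix.smul_mul, hUU']
  have hexp : mexp ((t : ℂ) • y)
      = U * Matrix.diagonal (fun i => ((Real.exp (t * lam i) : ℝ) : ℂ)) * star U := by
    rw [mexp, hsmul t, ← hUinv, Matrix.exp_conj U _ hUunit, Matrix.exp_diagonal,
      hUinv]
    have hpi : NormedSpace.exp (fun i : Fin d => ((t * lam i : ℝ) : ℂ))
        = fun i => ((Real.exp (t * lam i) : ℝ) : ℂ) := by
      rw [Pi.exp_def]
      funext i
      rw [← Complex.exp_eq_exp_ℂ, ← Complex.ofReal_exp]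
    rw [hpi]
  -- the key positive matrix
  have hMeq : (K1 : ℂ) • (1 : Matrix (Fin d) (Fin d) ℂ) + (s : ℂ) • y - mexp ((t : ℂ) • y)
      = U * Matrix.diagonal
          (fun i => ((K1 + s * lam i - Real.exp (t * lam i) : ℝ) : ℂ)) * star U := by
    rw [hconst K1, hsmul s, hexp, ← Matrix.add_mul, ← Matrix.mul_add, Matrix.diagonal_add,
      ← Matrix.sub_mul, ← Matrix.mul_sub, Matrix.diagonal_sub]
    congr 2
    funext i
    push_cast
    ring
  have hMpsd : ((K1 : ℂ) • (1 : Matrix (Fin d) (Fin d) ℂ) + (s : ℂ) • y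
      - mexp ((t : ℂ) • y)).PosSemidef := by
    rw [hMeq, Matrix.star_eq_conjTranspose]
    apply Matrix.PosSemidef.mul_mul_conjTranspose_same
    refine Matrix.posSemidef_diagonal_iff.mpr fun i => ?_
    refine Complex.zero_le_real.mpr ?_
    have := scalar_exp_le (t := t) hc (hlb i) (hub i)
    linarith
  constructor
  · show ((K1 : ℂ) • (1 : Matrix (Fin d) (Fin d) ℂ) - E.toFun (mexp ((t : ℂ) • y))).PosSemidef
    have hE : E.toFun ((K1 : ℂ) • (1 : Matrix (Fin d) (Fin d) ℂ) + (s : ℂ) • y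
        - mexp ((t : ℂ) • y))
        = (K1 : ℂ) • (1 : Matrix (Fin d) (Fin d) ℂ) - E.toFun (mexp ((t : ℂ) • y)) := by
      rw [condexp_sub, E.map_add, E.map_smul, E.map_smul, E.unital, hEy, smul_zero, add_zero]
    rw [← hE]
    exact E.pos _ hMpsd
  · show (((Real.exp (t ^ 2 * c ^ 2 / 2) : ℝ) : ℂ) • (1 : Matrix (Fin d) (Fin d) ℂ)
      - (K1 : ℂ) • (1 : Matrix (Fin d) (Fin d) ℂ)).PosSemidef
    have hK1 : K1 ≤ Real.exp (t ^ 2 * c ^ 2 / 2) := by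
      have h1 : K1 = Real.cosh (t * c) := by rw [Real.cosh_eq]
      have h2 := Real.cosh_le_exp_half_sq (t * c)
      have h3 : (t * c) ^ 2 / 2 = t ^ 2 * c ^ 2 / 2 := by ring
      rw [h1, ← h3]
      exact h2
    have heq : ((Real.exp (t ^ 2 * c ^ 2 / 2) : ℝ) : ℂ) • (1 : Matrix (Fin d) (Fin d) ℂ)
        - (K1 : ℂ) • (1 : Matrix (Fin d) (Fin d) ℂ)
        = Matrix.diagonal (fun _ : Fin d => ((Real.exp (t ^ 2 * c ^ 2 / 2) - K1 : ℝ) : ℂ)) := by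
      rw [← sub_smul, smul_one_diag]
      congr 1
      funext i
      push_cast
      ring
    rw [heq]
    refine Matrix.posSemidef_diagonal_iff.mpr fun i => ?_
    exact Complex.zero_le_real.mpr (by linarith)
end NCAzuma
end

section
/- Single-step Bernstein-type exponential moment bound under a conditional expectation (established in the proofs of Theorem 3.1 and Corollary 3.3). Let E be a conditional expectation on M_d(ℂ), let y ∈ M_d(ℂ) be Hermitian with E(y) = 0, E(y²) ≤ σ²·I for some σ > 0, and y ≤ M·I for some M > 0. Then for every t with 0 < t < 3/M, E(exp(t·y)) ≤ exp(t²σ² / (2·(1 − tM/3)))·I. -/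
namespace NCAzuma

open Matrix
open scoped ComplexOrder

noncomputable def Gfun (x : ℝ) : ℝ := 3*x^2/2 - (3-x)*(Real.exp x - 1 - x)
noncomputable def Gfun' (x : ℝ) : ℝ := x + 2 + (x-2)*Real.exp x

lemma hasDerivG (x : ℝ) : HasDerivAt Gfun (Gfun' x) x := by
  have h1 : HasDerivAt (fun x : ℝ => 3*x^2/2) (3*x) x := by
    have := ((hasDerivAt_pow 2 x).const_mul (3:ℝ)).div_const 2
    simpa using this.congr_deriv (by ring)
  have h2 : HasDerivAt (fun x : ℝ => Real.exp x - 1 - x) (Real.exp x - 1) x :=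
    ((Real.hasDerivAt_exp x).sub_const 1).sub (hasDerivAt_id x)
  have h3 : HasDerivAt (fun x : ℝ => (3-x)*(Real.exp x - 1 - x))
      ((-1)*(Real.exp x - 1 - x) + (3-x)*(Real.exp x - 1)) x :=
    (((hasDerivAt_const x (3:ℝ)).sub (hasDerivAt_id x)).mul h2).congr_deriv (by simp)
  have := h1.sub h3
  exact this.congr_deriv (by unfold Gfun'; ring)

lemma hasDerivG' (x : ℝ) : HasDerivAt Gfun' (1 + (x-1)*Real.exp x) x := by
  have h2 : HasDerivAt (fun x : ℝ => (x-2)*Real.exp x)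
      (1*Real.exp x + (x-2)*Real.exp x) x :=
    ((hasDerivAt_id x).sub_const 2).mul (Real.hasDerivAt_exp x)
  have h1 : HasDerivAt (fun x : ℝ => x + 2) 1 x := (hasDerivAt_id x).add_const 2
  have := h1.add h2
  exact this.congr_deriv (by ring)

lemma G''_nonneg (x : ℝ) : 0 ≤ 1 + (x-1)*Real.exp x := by
  have h1 := Real.add_one_le_exp (-x)
  have h2 := Real.exp_pos x
  have h3 : Real.exp (-x) * Real.exp x = 1 := by
    rw [← Real.exp_add]; simp
  nlinarith

lemma G'_mono : Monotone Gfun' := by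
  apply monotone_of_deriv_nonneg
  · exact fun x => (hasDerivG' x).differentiableAt
  · intro x
    rw [(hasDerivG' x).deriv]
    exact G''_nonneg x

lemma Gfun'_zero : Gfun' 0 = 0 := by simp [Gfun']

lemma G_nonneg (x : ℝ) : 0 ≤ Gfun x := by
  have hG0 : Gfun 0 = 0 := by simp [Gfun]
  rcases le_total 0 x with hx | hx
  · have : MonotoneOn Gfun (Set.Ici 0) := by
      apply monotoneOn_of_deriv_nonneg (convex_Ici 0)
        (fun y _ => (hasDerivG y).continuousAt.continuousWithinAt)
        (fun y _ => (hasDerivG y).differentiableAt.differentiableWithinAt)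
      intro y hy
      rw [(hasDerivG y).deriv, ← Gfun'_zero]
      exact G'_mono (le_of_lt (by simpa using hy))
    have := this (Set.self_mem_Ici) hx hx
    rwa [hG0] at this
  · have : AntitoneOn Gfun (Set.Iic 0) := by
      apply antitoneOn_of_deriv_nonpos (convex_Iic 0)
        (fun y _ => (hasDerivG y).continuousAt.continuousWithinAt)
        (fun y _ => (hasDerivG y).differentiableAt.differentiableWithinAt)
      intro y hy
      rw [(hasDerivG y).deriv, ← Gfun'_zero]
      exact G'_mono (le_of_lt (by simpa using hy))
    have := this hx (Set.self_mem_Iic) hx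
    rwa [hG0] at this

lemma key_scalar {b x : ℝ} (hb : b < 3) (hxb : x ≤ b) :
    Real.exp x ≤ 1 + x + x^2 * (3 / (2*(3-b))) := by
  have hG := G_nonneg x
  have h3x : 0 < 3 - x := by linarith
  have h3b : 0 < 3 - b := by linarith
  have h1 : Real.exp x - 1 - x ≤ 3*x^2/(2*(3-x)) := by
    rw [le_div_iff₀ (by positivity)]
    unfold Gfun at hG; nlinarith
  have h2 : 3*x^2/(2*(3-x)) ≤ x^2 * (3/(2*(3-b))) := by
    rw [div_le_iff₀ (by positivity)]
    have : x^2 * (3/(2*(3-b))) * (2*(3-x)) = (x^2 * 3) * ((2*(3-x))/(2*(3-b))) := by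
      field_simp
    rw [this]
    have hr : (1:ℝ) ≤ (2*(3-x))/(2*(3-b)) := by
      rw [le_div_iff₀ (by positivity)]; linarith
    nlinarith [sq_nonneg x]
  linarith

open Matrix in
lemma exp_unitary_conj {d : ℕ} (U : Matrix.unitaryGroup (Fin d) ℂ) (A : Matrix (Fin d) (Fin d) ℂ) :
    NormedSpace.exp ((U : Matrix (Fin d) (Fin d) ℂ) * A * star (U : Matrix (Fin d) (Fin d) ℂ))
      = (U : Matrix (Fin d) (Fin d) ℂ) * NormedSpace.exp A * star (U : Matrix (Fin d) (Fin d) ℂ) := by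
  have h := Matrix.exp_units_conj (Unitary.toUnits U) A
  have h2 : ((Unitary.toUnits U)⁻¹ : (Matrix (Fin d) (Fin d) ℂ)ˣ)
      = (star (U : Matrix (Fin d) (Fin d) ℂ) : Matrix (Fin d) (Fin d) ℂ) := rfl
  rw [h2] at h
  exact h

open Matrix in
open scoped ComplexOrder in
lemma psd_smul' {d : ℕ} {A : Matrix (Fin d) (Fin d) ℂ} (hA : A.PosSemidef) {c : ℝ} (hc : 0 ≤ c) :
    (((c:ℝ):ℂ) • A).PosSemidef := by
  constructor
  · rw [Matrix.IsHermitian, conjTranspose_smul, hA.1.eq]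
    congr 1
    simp [Complex.ext_iff]
  · intro x
    exact (hA.smul (by exact_mod_cast hc : (0:ℂ) ≤ ((c:ℝ):ℂ))).2 x

/-- **Single-step Bernstein-type exponential moment bound under a conditional expectation**:
if `E(y) = 0`, `E(y²) ≤ σ²·I` and `y ≤ M·I`, then for `0 < t < 3/M`,
`E(exp(t·y)) ≤ exp(t²σ²/(2(1 − tM/3)))·I`. -/
theorem condexp_exp_bernstein_bound {d : ℕ} (hd : 1 ≤ d) (E : CondExp d)
    (y : Matrix (Fin d) (Fin d) ℂ) (hy : y.IsHermitian) (hEy : E.toFun y = 0)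
    (σ M : ℝ) (hσ : 0 < σ) (hM : 0 < M)
    (hvar : Loewner (E.toFun (y * y))
      (((σ ^ 2 : ℝ) : ℂ) • (1 : Matrix (Fin d) (Fin d) ℂ)))
    (hupp : Loewner y ((M : ℂ) • (1 : Matrix (Fin d) (Fin d) ℂ)))
    (t : ℝ) (ht0 : 0 < t) (htM : t < 3 / M) :
    Loewner (E.toFun (mexp ((t : ℂ) • y)))
      (((Real.exp (t ^ 2 * σ ^ 2 / (2 * (1 - t * M / 3))) : ℝ) : ℂ) •
        (1 : Matrix (Fin d) (Fin d) ℂ)) := by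
  -- basic numeric facts
  have htM3 : t * M < 3 := by
    rw [lt_div_iff₀ hM] at htM; linarith
  have h3tM : 0 < 3 - t * M := by linarith
  set K : ℝ := 3 / (2 * (3 - t * M)) with hKdef
  have hK0 : 0 ≤ K := by positivity
  set c : ℝ := K * t ^ 2 with hcdef
  have hc0 : 0 ≤ c := by positivity
  -- spectral data
  set U : Matrix (Fin d) (Fin d) ℂ := (hy.eigenvectorUnitary : Matrix (Fin d) (Fin d) ℂ)
    with hUdef
  set lam : Fin d → ℝ := hy.eigenvalues with hlamdef
  have hUsU : U * star U = 1 := Matrix.mem_unitaryGroup_iff.mp hy.eigenvectorUnitary.2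
  have hsUU : star U * U = 1 := Matrix.mem_unitaryGroup_iff'.mp hy.eigenvectorUnitary.2
  have hspec : y = U * Matrix.diagonal (fun i => ((lam i : ℝ) : ℂ)) * star U := by
    have := hy.spectral_theorem
    simpa [Function.comp_def] using this
  -- conjugation helpers
  have hconj_psd : ∀ v : Fin d → ℝ, (∀ i, 0 ≤ v i) →
      (U * Matrix.diagonal (fun i => ((v i : ℝ) : ℂ)) * star U).PosSemidef := by
    intro v hv
    have hD : (Matrix.diagonal (fun i => ((v i : ℝ) : ℂ))).PosSemidef :=
      Matrix.PosSemidef.diagonal (fun i => by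
        simp only [Pi.zero_apply]; exact_mod_cast hv i)
    simpa [Matrix.star_eq_conjTranspose] using hD.mul_mul_conjTranspose_same U
  have hone : (1 : Matrix (Fin d) (Fin d) ℂ)
      = U * Matrix.diagonal (fun _ => ((1 : ℝ) : ℂ)) * star U := by
    have : Matrix.diagonal (fun _ : Fin d => ((1:ℝ):ℂ)) = 1 := by
      simp [Matrix.diagonal_one]
    rw [this, Matrix.mul_one, hUsU]
  have hsmulconj : ∀ (r : ℝ) (v : Fin d → ℝ),
      ((r : ℂ)) • (U * Matrix.diagonal (fun i => ((v i : ℝ) : ℂ)) * star U)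
        = U * Matrix.diagonal (fun i => ((r * v i : ℝ) : ℂ)) * star U := by
    intro r v
    have hvec : ((r : ℂ) • fun i => ((v i : ℝ) : ℂ)) = fun i => ((r * v i : ℝ) : ℂ) := by
      funext i
      simp only [Pi.smul_apply, smul_eq_mul]
      push_cast
      ring
    rw [← smul_mul_assoc, ← mul_smul_comm, ← Matrix.diagonal_smul, hvec]
  have hty : (t : ℂ) • y = U * Matrix.diagonal (fun i => ((t * lam i : ℝ) : ℂ)) * star U := by
    rw [hspec]; exact hsmulconj t lam
  have hyy : y * y = U * Matrix.diagonal (fun i => ((lam i * lam i : ℝ) : ℂ)) * star U := by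
    rw [hspec]
    calc U * Matrix.diagonal (fun i => ((lam i : ℝ) : ℂ)) * star U *
          (U * Matrix.diagonal (fun i => ((lam i : ℝ) : ℂ)) * star U)
        = U * Matrix.diagonal (fun i => ((lam i : ℝ) : ℂ)) * (star U * U) *
          (Matrix.diagonal (fun i => ((lam i : ℝ) : ℂ)) * star U) := by
          simp only [Matrix.mul_assoc]
      _ = U * (Matrix.diagonal (fun i => ((lam i : ℝ) : ℂ)) *
            Matrix.diagonal (fun i => ((lam i : ℝ) : ℂ))) * star U := by
          rw [hsUU, Matrix.mul_one]; simp only [Matrix.mul_assoc]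
      _ = U * Matrix.diagonal (fun i => ((lam i * lam i : ℝ) : ℂ)) * star U := by
          rw [Matrix.diagonal_mul_diagonal]; push_cast; rfl
  have hexpA : mexp ((t : ℂ) • y)
      = U * Matrix.diagonal (fun i => ((Real.exp (t * lam i) : ℝ) : ℂ)) * star U := by
    rw [mexp, hty, exp_unitary_conj, Matrix.exp_diagonal]
    have hdiag : NormedSpace.exp (fun i => ((t * lam i : ℝ) : ℂ))
        = fun i => ((Real.exp (t * lam i) : ℝ) : ℂ) := by
      rw [Pi.exp_def]
      funext i
      rw [← Complex.exp_eq_exp_ℂ, Complex.ofReal_exp]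
    rw [hdiag]
  -- eigenvalue upper bound
  have hlamM : ∀ i, lam i ≤ M := by
    intro i
    have h := hupp.conjTranspose_mul_mul_same U
    have heq : Uᴴ * ((M : ℂ) • 1 - y) * U
        = Matrix.diagonal (fun i => ((M - lam i : ℝ) : ℂ)) := by
      rw [← Matrix.star_eq_conjTranspose, Matrix.mul_sub, Matrix.sub_mul,
        mul_smul_comm, smul_mul_assoc, Matrix.mul_one, hsUU]
      have h2 : star U * y * U = Matrix.diagonal (fun i => ((lam i : ℝ) : ℂ)) := by
        have := hy.conjStarAlgAut_star_eigenvectorUnitary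
        simpa [Function.comp_def, Unitary.conjStarAlgAut_star_apply] using this
      rw [h2]
      rw [Matrix.smul_one_eq_diagonal, Matrix.diagonal_sub]
      congr 1
      funext i
      push_cast
      ring
    rw [heq] at h
    have := Matrix.posSemidef_diagonal_iff.mp h i
    have h3 : (0:ℝ) ≤ M - lam i := by exact_mod_cast this
    linarith
  -- the pointwise scalar bound
  have hg : ∀ i, 0 ≤ 1 + t * lam i + c * (lam i * lam i) - Real.exp (t * lam i) := by
    intro i
    have hx : t * lam i ≤ t * M := mul_le_mul_of_nonneg_left (hlamM i) (le_of_lt ht0)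
    have hkey := key_scalar (b := t * M) (x := t * lam i) htM3 hx
    have : (t * lam i) ^ 2 * (3 / (2 * (3 - t * M))) = c * (lam i * lam i) := by
      rw [hcdef, hKdef]; ring
    rw [this] at hkey
    linarith
  -- matrix inequality before conditioning
  set B : Matrix (Fin d) (Fin d) ℂ :=
    1 + (t : ℂ) • y + ((c : ℝ) : ℂ) • (y * y) with hBdef
  have hBA : (B - mexp ((t : ℂ) • y)).PosSemidef := by
    have hcyy : ((c : ℝ) : ℂ) • (y * y)
        = U * Matrix.diagonal (fun i => ((c * (lam i * lam i) : ℝ) : ℂ)) * star U := by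
      rw [hyy]; exact hsmulconj c _
    have hBAeq : B - mexp ((t : ℂ) • y)
        = U * Matrix.diagonal
            (fun i => ((1 + t * lam i + c * (lam i * lam i) - Real.exp (t * lam i) : ℝ) : ℂ))
          * star U := by
      rw [hBdef, hexpA, hone, hty, hcyy]
      simp only [← Matrix.add_mul, ← Matrix.sub_mul, ← Matrix.mul_add, ← Matrix.mul_sub,
        Matrix.diagonal_add, Matrix.diagonal_sub]
      congr 2
      funext i
      push_cast
      ring
    rw [hBAeq]
    exact hconj_psd _ hg
  -- apply the conditional expectation
  have hEsub : ∀ a b, E.toFun (a - b) = E.toFun a - E.toFun b := by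
    intro a b
    rw [sub_eq_add_neg, ← neg_one_smul ℂ b, E.map_add, E.map_smul, neg_one_smul,
      ← sub_eq_add_neg]
  have hEBA : (E.toFun B - E.toFun (mexp ((t : ℂ) • y))).PosSemidef := by
    rw [← hEsub]; exact E.pos _ hBA
  have hEB : E.toFun B = 1 + ((c : ℝ) : ℂ) • E.toFun (y * y) := by
    rw [hBdef, E.map_add, E.map_add, E.map_smul, E.map_smul, E.unital, hEy]
    simp
  -- compare with scalar matrices
  have hstep2 : ((((1 : ℝ) + c * σ ^ 2 : ℝ) : ℂ) • (1 : Matrix (Fin d) (Fin d) ℂ)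
      - E.toFun B).PosSemidef := by
    have heq : (((1 : ℝ) + c * σ ^ 2 : ℝ) : ℂ) • (1 : Matrix (Fin d) (Fin d) ℂ) - E.toFun B
        = ((c : ℝ) : ℂ) • (((σ ^ 2 : ℝ) : ℂ) • (1 : Matrix (Fin d) (Fin d) ℂ)
            - E.toFun (y * y)) := by
      rw [hEB]
      push_cast
      rw [smul_sub, smul_smul]
      module
    rw [heq]
    exact psd_smul' hvar hc0
  have hstep3 : ((((Real.exp (c * σ ^ 2)) : ℝ) : ℂ) • (1 : Matrix (Fin d) (Fin d) ℂ)
      - (((1 : ℝ) + c * σ ^ 2 : ℝ) : ℂ) • (1 : Matrix (Fin d) (Fin d) ℂ)).PosSemidef := by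
    have heq : (((Real.exp (c * σ ^ 2)) : ℝ) : ℂ) • (1 : Matrix (Fin d) (Fin d) ℂ)
        - (((1 : ℝ) + c * σ ^ 2 : ℝ) : ℂ) • (1 : Matrix (Fin d) (Fin d) ℂ)
        = (((Real.exp (c * σ ^ 2) - (1 + c * σ ^ 2) : ℝ)) : ℂ)
            • (1 : Matrix (Fin d) (Fin d) ℂ) := by
      push_cast
      module
    rw [heq]
    refine psd_smul' Matrix.PosSemidef.one ?_
    have := Real.add_one_le_exp (c * σ ^ 2)
    linarith
  -- identify the exponent
  have hexpo : t ^ 2 * σ ^ 2 / (2 * (1 - t * M / 3)) = c * σ ^ 2 := by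
    rw [hcdef, hKdef]
    have h1 : (1 : ℝ) - t * M / 3 ≠ 0 := by
      intro h; apply absurd h3tM; rw [not_lt]; nlinarith
    field_simp
  -- assemble
  unfold Loewner
  rw [hexpo]
  have hfinal : (((Real.exp (c * σ ^ 2) : ℝ) : ℂ) • (1 : Matrix (Fin d) (Fin d) ℂ))
      - E.toFun (mexp ((t : ℂ) • y))
      = ((((Real.exp (c * σ ^ 2)) : ℝ) : ℂ) • (1 : Matrix (Fin d) (Fin d) ℂ)
          - (((1 : ℝ) + c * σ ^ 2 : ℝ) : ℂ) • (1 : Matrix (Fin d) (Fin d) ℂ))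
        + ((((1 : ℝ) + c * σ ^ 2 : ℝ) : ℂ) • (1 : Matrix (Fin d) (Fin d) ℂ) - E.toFun B)
        + (E.toFun B - E.toFun (mexp ((t : ℂ) • y))) := by
    abel
  rw [hfinal]
  exact (hstep3.add hstep2).add hEBA
end NCAzuma
end
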